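/- Let G = (V, E) be a finite graph containing a cycle of odd length, and let ε ∈ (1/2, 1]. Then every ε-stable configuration η : V → [0,1] is non-injective; in particular, if G has N vertices then μ_ε(G) < N. -/
import Mathlib


open Set

/-- A configuration `η` is `ε`-stable for the graph `G` if along every edge the
opinions either agree or differ by more than `ε`. -/
def IsStable {V : Type*} (G : SimpleGraph V) (ε : ℝ) (η : V → ℝ) : Prop :=
  ∀ ⦃x y : V⦄, G.Adj x y → η x = η y ∨ ε < |η x - η y|

/-- The `ε`-opinion index of `G`: the maximum number of distinct opinions taken
by an `ε`-stable configuration `η : V → [0,1]`. -/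
noncomputable def opinionIndex {V : Type*} (G : SimpleGraph V) (ε : ℝ) : ℕ :=
  sSup {n : ℕ | ∃ η : V → ℝ,
    (∀ x, η x ∈ Set.Icc (0 : ℝ) 1) ∧ IsStable G ε η ∧ (Set.range η).ncard = n}

lemma walk_parity {V : Type*} {G : SimpleGraph V} (c : V → Bool)
    (h : ∀ ⦃x y : V⦄, G.Adj x y → c x ≠ c y) :
    ∀ {a b : V} (p : G.Walk a b), (c a = c b ↔ Even p.length) := by
  intro a b p
  induction p with
  | nil => simp
  | @cons a x b hadj p ih =>
    have hne := h hadj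
    rw [SimpleGraph.Walk.length_cons, Nat.even_add_one, ← ih]
    cases hca : c a <;> cases hcx : c x <;> cases hcb : c b <;> simp_all

theorem stmt14 {V : Type*} [Fintype V] (G : SimpleGraph V)
    (hodd : ∃ (v : V) (w : G.Walk v v), w.IsCycle ∧ Odd w.length)
    (ε : ℝ) (h1 : 1 / 2 < ε) (h2 : ε ≤ 1) :
    (∀ η : V → ℝ, (∀ x, η x ∈ Set.Icc (0 : ℝ) 1) → IsStable G ε η →
        ¬ Function.Injective η) ∧
      opinionIndex G ε < Fintype.card V := by
  obtain ⟨v, w, _, hwodd⟩ := hodd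
  have key : ∀ η : V → ℝ, (∀ x, η x ∈ Set.Icc (0 : ℝ) 1) → IsStable G ε η →
      ¬ Function.Injective η := by
    intro η hrange hstab hinj
    set c : V → Bool := fun v => decide (η v ≤ 1 / 2) with hc
    have hcol : ∀ ⦃x y : V⦄, G.Adj x y → c x ≠ c y := by
      intro x y hadj hceq
      have hne : η x ≠ η y := fun h => hadj.ne (hinj h)
      have hgt : ε < |η x - η y| := (hstab hadj).resolve_left hne
      obtain ⟨hx0, hx1⟩ := hrange x
      obtain ⟨hy0, hy1⟩ := hrange y
      have hle : |η x - η y| ≤ 1 / 2 := by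
        simp only [hc, decide_eq_decide] at hceq
        by_cases hx : η x ≤ 1 / 2
        · have hy : η y ≤ 1 / 2 := hceq.mp hx
          rw [abs_sub_le_iff]; constructor <;> linarith
        · have hy : ¬ η y ≤ 1 / 2 := fun h => hx (hceq.mpr h)
          push_neg at hy
          rw [abs_sub_le_iff]; push_neg at hx; constructor <;> linarith
      linarith
    have := (walk_parity c hcol w).mp rfl
    exact (Nat.not_even_iff_odd.mpr hwodd) this
  haveI : Nonempty V := ⟨v⟩
  refine ⟨key, ?_⟩
  have hcard : ∀ η : V → ℝ, ¬ Function.Injective η →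
      (Set.range η).ncard < Fintype.card V := by
    intro η hinj
    have h1' : Set.range η = ↑(Finset.univ.image η) := by
      simp [Finset.coe_image]
    rw [h1', Set.ncard_coe_finset]
    have hle : (Finset.univ.image η).card ≤ (Finset.univ : Finset V).card :=
      Finset.card_image_le (s := (Finset.univ : Finset V)) (f := η)
    have hne : (Finset.univ.image η).card ≠ (Finset.univ : Finset V).card := by
      intro heq
      apply hinj
      have := Finset.card_image_iff.mp heq
      rw [Finset.coe_univ] at this
      exact fun a b hab => this trivial trivial hab
    rw [Fintype.card]
    omega
  apply Nat.lt_of_lt_of_le (m := Fintype.card V - 1 + 1)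
  · apply Nat.lt_succ_of_le
    apply csSup_le
    · exact ⟨1, fun _ => 0, fun x => ⟨le_refl 0, zero_le_one⟩,
        fun x y _ => Or.inl rfl, by rw [Set.range_const]; exact Set.ncard_singleton 0⟩
    · rintro n ⟨η, hr, hs, hn⟩
      by_cases hinj : Function.Injective η
      · exact absurd hinj (key η hr hs)
      · have := hcard η hinj
        omega
  · have : 1 ≤ Fintype.card V := Fintype.card_pos_iff.mpr ⟨v⟩
    omega
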